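/- Let Π = (δ, Σ, 𝒞) be an LCL problem for δ-regular rooted trees and let Σ̃ ⊆ Σ. Then for every label σ ∈ trim(Σ̃) there exists a node configuration (σ : a_1 a_2 ⋯ a_δ) ∈ 𝒞 such that a_j ∈ trim(Σ̃) for all 1 ≤ j ≤ δ. -/
import Mathlib


/-- `rOk 𝒞 S i σ`: there is a correct labeling of the complete rooted tree `T_i`
whose root has label `σ` and all of whose labels lie in `S` (every node with
children must use a node configuration from `𝒞`). -/
def rOk {L : Type} (C : Set (L × Multiset L)) (S : Set L) : ℕ → L → Prop
  | 0, σ => σ ∈ S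
  | i + 1, σ => σ ∈ S ∧ ∃ m : Multiset L, (σ, m) ∈ C ∧ ∀ a ∈ m, rOk C S i a

/-- `trim(Σ̃)` for rooted trees: labels `σ ∈ S` such that for every `i ≥ 1` there is
a correct labeling of `T_i` with root label `σ` and all labels in `S`. -/
def trimR {L : Type} (C : Set (L × Multiset L)) (S : Set L) : Set L :=
  {σ | σ ∈ S ∧ ∀ i : ℕ, 1 ≤ i → rOk C S i σ}

lemma rOk_succ_imp {L : Type} (C : Set (L × Multiset L)) (S : Set L) :
    ∀ i σ, rOk C S (i + 1) σ → rOk C S i σ := by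
  intro i
  induction i with
  | zero => intro σ h; exact h.1
  | succ i ih =>
    rintro σ ⟨hσ, m, hm, hall⟩
    exact ⟨hσ, m, hm, fun a ha => ih a (hall a ha)⟩

lemma rOk_le {L : Type} (C : Set (L × Multiset L)) (S : Set L)
    {i j : ℕ} (h : j ≤ i) (σ : L) (hσ : rOk C S i σ) : rOk C S j σ := by
  obtain ⟨k, rfl⟩ := Nat.exists_eq_add_of_le h
  induction k with
  | zero => simpa using hσ
  | succ k ih =>
    rw [Nat.add_succ] at hσ
    exact ih (Nat.le_add_right _ _) (rOk_succ_imp C S (j + k) σ hσ)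

/-- Property of trimming, rooted trees. -/
theorem stmt8 {L : Type} [Fintype L] [DecidableEq L]
    (δ : ℕ) (hδ : 1 ≤ δ) (C : Set (L × Multiset L))
    (hC : ∀ c ∈ C, Multiset.card c.2 = δ)
    (St : Set L) :
    ∀ σ ∈ trimR C St, ∃ m : Multiset L, (σ, m) ∈ C ∧ ∀ a ∈ m, a ∈ trimR C St := by
  intro σ hσ
  have h : ∀ i : ℕ, ∃ m : Multiset L, (σ, m) ∈ C ∧ ∀ a ∈ m, rOk C St i a := by
    intro i
    have := hσ.2 (i + 1) (by omega)
    exact this.2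
  -- package choices into a function to a finite type
  let f : ℕ → Sym L δ := fun i => ⟨(h i).choose, hC _ (h i).choose_spec.1⟩
  obtain ⟨s, hs'⟩ := Finite.exists_infinite_fiber f
  have hs : (f ⁻¹' {s}).Infinite := Set.infinite_coe_iff.mp hs'
  obtain ⟨i₀, hi₀⟩ := hs.nonempty
  have hf : ∀ i, f i = s → (h i).choose = (s : Multiset L) := by
    intro i hi
    simpa [f] using congrArg Subtype.val hi
  have hmem : (σ, (s : Multiset L)) ∈ C := by
    have := (h i₀).choose_spec.1
    rwa [hf i₀ hi₀] at this
  refine ⟨(s : Multiset L), hmem, fun a ha => ⟨?_, ?_⟩⟩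
  · -- a ∈ St : from rOk at level i₀
    have h0 : rOk C St i₀ a := by
      have := (h i₀).choose_spec.2 a (by rwa [hf i₀ hi₀])
      exact this
    have := rOk_le C St (Nat.zero_le i₀) a h0
    exact this
  · intro j hj
    obtain ⟨i, hi, hji⟩ := hs.exists_gt j
    have hra : rOk C St i a := (h i).choose_spec.2 a (by rwa [hf i hi])
    exact rOk_le C St (le_of_lt hji) a hra
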